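/- (Proposition 2: descent direction of the pseudo-zeroth-order gradient.) Let n ≥ 1, let x_1, …, x_n be points in ℝ^p, let J_1, …, J_n be d×m real matrices (representing the transposed Jacobians J_fᵀ(x_i)) satisfying ‖J_i − J_j‖ ≤ L_J ‖x_i − x_j‖ for all i, j (operator norm induced by Euclidean norms), and let e_1, …, e_n ∈ ℝ^m (representing the errors e(x_i)) satisfy ‖e_i − e_j‖ ≤ L_e ‖x_i − x_j‖ for all i, j. Let ε be a fixed d×m matrix and set M := (1/n) Σ_i J_i + ε, ē := (1/n) Σ_i e_i, g := (1/n) Σ_i J_i e_i, Δ_x := (1/n²) Σ_{i,j} ‖x_i − x_j‖², and e_ε := ‖ε ē‖. If ‖g‖ > (1/2) L_J L_e Δ_x + e_ε, then ⟨g, M ē⟩ > 0; that is, the feedback direction M ē makes a positive inner product with the true average gradient direction g. -/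

import Mathlib

open scoped BigOperators RealInnerProductSpace

/-- **Proposition 2: descent direction of the pseudo-zeroth-order
gradient.** With transposed Jacobians `J_i` and errors `e_i` that are Lipschitz
in the data `x_i`, a fixed error matrix `ε`, `M := (1/n) ∑_i J_i + ε`,
`ē := (1/n) ∑_i e_i`, `g := (1/n) ∑_i J_i e_i`, `Δ_x := (1/n²) ∑_{i,j} ‖x_i − x_j‖²`
and `e_ε := ‖ε ē‖`: if `‖g‖ > (1/2) L_J L_e Δ_x + e_ε` then `⟪g, M ē⟫ > 0`. -/
theorem stmt12 {p d m n : ℕ} (hn : 1 ≤ n) (L_J L_e : ℝ)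
    (x : Fin n → EuclideanSpace ℝ (Fin p))
    (J : Fin n → EuclideanSpace ℝ (Fin m) →L[ℝ] EuclideanSpace ℝ (Fin d))
    (e : Fin n → EuclideanSpace ℝ (Fin m))
    (ε : EuclideanSpace ℝ (Fin m) →L[ℝ] EuclideanSpace ℝ (Fin d))
    (hJ : ∀ i j, ‖J i - J j‖ ≤ L_J * ‖x i - x j‖)
    (he : ∀ i j, ‖e i - e j‖ ≤ L_e * ‖x i - x j‖)
    (hbig : ‖(n : ℝ)⁻¹ • ∑ i, J i (e i)‖
      > (1 / 2) * L_J * L_e * (((n : ℝ) ^ 2)⁻¹ * ∑ i, ∑ j, ‖x i - x j‖ ^ 2)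
        + ‖ε ((n : ℝ)⁻¹ • ∑ i, e i)‖) :
    0 < ⟪(n : ℝ)⁻¹ • ∑ i, J i (e i),
          ((n : ℝ)⁻¹ • ∑ i, J i + ε) ((n : ℝ)⁻¹ • ∑ i, e i)⟫ := by
  have hn0 : (0:ℝ) < (n:ℝ) := by exact_mod_cast hn
  set g : EuclideanSpace ℝ (Fin d) := (n : ℝ)⁻¹ • ∑ i, J i (e i) with hg
  set eb : EuclideanSpace ℝ (Fin m) := (n : ℝ)⁻¹ • ∑ i, e i with heb
  -- key identity
  have key : g - ((n : ℝ)⁻¹ • ∑ i, J i) eb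
      = ((2:ℝ) * (n:ℝ)^2)⁻¹ • ∑ i, ∑ j, (J i - J j) (e i - e j) := by
    have expand : ∑ i, ∑ j, (J i - J j) (e i - e j)
        = (2 * n : ℝ) • ∑ i, J i (e i) - (2:ℝ) • ∑ i, ∑ j, J i (e j) := by
      have h1 : ∀ i j : Fin n, (J i - J j) (e i - e j)
          = J i (e i) - J i (e j) - J j (e i) + J j (e j) := by
        intro i j
        simp [ContinuousLinearMap.sub_apply, map_sub]
        abel
      simp only [h1, Finset.sum_add_distrib, Finset.sum_sub_distrib]
      have c1 : ∑ i : Fin n, ∑ _j : Fin n, J i (e i) = (n:ℝ) • ∑ i, J i (e i) := by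
        simp [Finset.sum_const, ← Finset.smul_sum, ← Nat.cast_smul_eq_nsmul ℝ]
      have c2 : ∑ _i : Fin n, ∑ j : Fin n, J j (e j) = (n:ℝ) • ∑ i, J i (e i) := by
        simp [Finset.sum_const, ← Nat.cast_smul_eq_nsmul ℝ]
      have c3 : ∑ i : Fin n, ∑ j : Fin n, J j (e i) = ∑ i, ∑ j, J i (e j) :=
        Finset.sum_comm
      rw [c1, c2, c3]
      rw [two_smul, two_mul, add_smul]
      abel
    have lhs : ((n : ℝ)⁻¹ • ∑ i, J i) eb = ((n:ℝ)⁻¹ * (n:ℝ)⁻¹) • ∑ i, ∑ j, J i (e j) := by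
      rw [heb]
      simp [ContinuousLinearMap.smul_apply, ContinuousLinearMap.sum_apply, map_smul,
        Finset.smul_sum, map_sum, mul_smul]
      exact Finset.sum_comm
    rw [lhs, expand, hg, smul_sub, smul_smul, smul_smul]
    have e1 : ((2:ℝ) * (n:ℝ)^2)⁻¹ * (2 * n) = (n:ℝ)⁻¹ := by
      field_simp
    have e2 : ((2:ℝ) * (n:ℝ)^2)⁻¹ * 2 = (n:ℝ)⁻¹ * (n:ℝ)⁻¹ := by
      field_simp
    rw [e1, e2]
  -- norm bound
  have hbound : ‖g - ((n : ℝ)⁻¹ • ∑ i, J i) eb‖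
      ≤ (1 / 2) * L_J * L_e * (((n : ℝ) ^ 2)⁻¹ * ∑ i, ∑ j, ‖x i - x j‖ ^ 2) := by
    rw [key]
    have hpos : (0:ℝ) < (2 * (n:ℝ)^2) := by positivity
    rw [norm_smul]
    have h1 : ‖∑ i, ∑ j, (J i - J j) (e i - e j)‖
        ≤ ∑ i, ∑ j, L_J * L_e * ‖x i - x j‖ ^ 2 := by
      refine (norm_sum_le _ _).trans (Finset.sum_le_sum fun i _ => ?_)
      refine (norm_sum_le _ _).trans (Finset.sum_le_sum fun j _ => ?_)
      calc ‖(J i - J j) (e i - e j)‖ ≤ ‖J i - J j‖ * ‖e i - e j‖ :=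
            ContinuousLinearMap.le_opNorm _ _
        _ ≤ (L_J * ‖x i - x j‖) * (L_e * ‖x i - x j‖) := by
            apply mul_le_mul (hJ i j) (he i j) (norm_nonneg _)
            exact le_trans (norm_nonneg _) (hJ i j)
        _ = L_J * L_e * ‖x i - x j‖ ^ 2 := by ring
      done
    calc ‖((2:ℝ) * (n:ℝ)^2)⁻¹‖ * ‖∑ i, ∑ j, (J i - J j) (e i - e j)‖
        ≤ ((2:ℝ) * (n:ℝ)^2)⁻¹ * ∑ i, ∑ j, L_J * L_e * ‖x i - x j‖ ^ 2 := by
          rw [Real.norm_eq_abs, abs_of_pos (by positivity)]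
          exact mul_le_mul_of_nonneg_left h1 (by positivity)
      _ = (1 / 2) * L_J * L_e * (((n : ℝ) ^ 2)⁻¹ * ∑ i, ∑ j, ‖x i - x j‖ ^ 2) := by
          have hs : ∑ i, ∑ j, L_J * L_e * ‖x i - x j‖ ^ 2
              = L_J * L_e * ∑ i, ∑ j, ‖x i - x j‖ ^ 2 := by
            simp_rw [← Finset.mul_sum]
          rw [hs]; field_simp
  have hDnn : (0:ℝ) ≤ (1 / 2) * L_J * L_e * (((n : ℝ) ^ 2)⁻¹ * ∑ i, ∑ j, ‖x i - x j‖ ^ 2) :=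
    le_trans (norm_nonneg _) hbound
  -- final
  rw [ContinuousLinearMap.add_apply, inner_add_right]
  have hJeb : ((n : ℝ)⁻¹ • ∑ i, J i) eb = g - (g - ((n : ℝ)⁻¹ • ∑ i, J i) eb) := by abel
  rw [hJeb, inner_sub_right, real_inner_self_eq_norm_sq]
  have h2 := abs_real_inner_le_norm g (g - ((n : ℝ)⁻¹ • ∑ i, J i) eb)
  have h3 := abs_real_inner_le_norm g (ε eb)
  have hgn : ‖g‖ > (1 / 2) * L_J * L_e * (((n : ℝ) ^ 2)⁻¹ * ∑ i, ∑ j, ‖x i - x j‖ ^ 2)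
      + ‖ε eb‖ := hbig
  have hg0 : 0 < ‖g‖ := lt_of_le_of_lt (by positivity) hgn
  have := abs_le.mp h2
  have := abs_le.mp h3
  nlinarith [mul_le_mul_of_nonneg_left hbound (le_of_lt hg0)]
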